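/- Let g ∈ SL(2,ℝ). If there exist γ ∈ Γ and a ∈ (0,1] such that (gγ)·(1,0)ᵗ = (a,0)ᵗ, then there exist γ' ∈ Γ and (a',b') ∈ Ω₁ such that g·γ' = M_{a',b'}. -/

import Mathlib

open Real Matrix MeasureTheory Filter Set

noncomputable section

abbrev SL2 := Matrix.SpecialLinearGroup (Fin 2) ℝ

/-- The elliptic generator R of the Veech group of 𝓛. -/
def Rgen : SL2 := ⟨!![1 + Real.sqrt 2, -(2 + Real.sqrt 2); 1, -1], by
  rw [Matrix.det_fin_two_of]; ring⟩

/-- The parabolic generator S of the Veech group of 𝓛. -/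
def Sgen : SL2 := ⟨!![1, 2 + Real.sqrt 2; 0, 1], by
  rw [Matrix.det_fin_two_of]; ring⟩

/-- The Veech group Γ of the translation surface 𝓛. -/
def Γ : Subgroup SL2 := Subgroup.closure {Rgen, Sgen}

/-- The region Ω₁ = {(a,b) : 0 < a ≤ 1, 1 − (2+√2)a < b ≤ 1}. -/
def Ω₁ : Set (ℝ × ℝ) :=
  {p | 0 < p.1 ∧ p.1 ≤ 1 ∧ 1 - (2 + Real.sqrt 2) * p.1 < p.2 ∧ p.2 ≤ 1}

lemma Sgen_zpow (n : ℤ) :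
    ((Sgen ^ n : SL2) : Matrix (Fin 2) (Fin 2) ℝ) = !![1, n * (2 + Real.sqrt 2); 0, 1] := by
  induction n using Int.induction_on with
  | zero => simp [Matrix.one_fin_two]
  | succ k ih =>
      rw [_root_.zpow_add, zpow_one, Matrix.SpecialLinearGroup.coe_mul, ih]
      show _ * (Sgen : Matrix (Fin 2) (Fin 2) ℝ) = _
      rw [Sgen, Matrix.SpecialLinearGroup.coe_mk, Matrix.mul_fin_two]
      push_cast
      congr 1 <;> ring
  | pred k ih =>
      rw [_root_.zpow_sub, zpow_one, Matrix.SpecialLinearGroup.coe_mul, ih]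
      have hSinv : ((Sgen⁻¹ : SL2) : Matrix (Fin 2) (Fin 2) ℝ)
          = !![1, -(2 + Real.sqrt 2); 0, 1] := by
        rw [Matrix.SpecialLinearGroup.coe_inv, Sgen, Matrix.SpecialLinearGroup.coe_mk,
          Matrix.adjugate_fin_two_of]
        norm_num
      rw [hSinv, Matrix.mul_fin_two]
      push_cast
      congr 1 <;> ring

/-- If some gγ (γ ∈ Γ) sends (1,0) to a horizontal vector (a,0) with 0 < a ≤ 1, then a suitable
Γ-translate of g is of the form M_{a',b'} with (a',b') ∈ Ω₁. -/
theorem surface_in_Omega1 (g : SL2)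
    (h : ∃ γ ∈ Γ, ∃ a : ℝ, 0 < a ∧ a ≤ 1 ∧
      Matrix.mulVec ((g * γ : SL2) : Matrix (Fin 2) (Fin 2) ℝ) ![1, 0] = ![a, 0]) :
    ∃ γ' ∈ Γ, ∃ p ∈ Ω₁,
      ((g * γ' : SL2) : Matrix (Fin 2) (Fin 2) ℝ) = !![p.1, p.2; 0, p.1⁻¹] := by
  obtain ⟨γ, hγ, a, ha0, ha1, hv⟩ := h
  set M := ((g * γ : SL2) : Matrix (Fin 2) (Fin 2) ℝ) with hMdef
  have h00 : M 0 0 = a := by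
    have := congrFun hv 0
    simpa [Matrix.mulVec, dotProduct, Fin.sum_univ_two] using this
  have h10 : M 1 0 = 0 := by
    have := congrFun hv 1
    simpa [Matrix.mulVec, dotProduct, Fin.sum_univ_two] using this
  have hdet : M.det = 1 := (g * γ).2
  rw [Matrix.det_fin_two, h00, h10] at hdet
  have h11 : M 1 1 = a⁻¹ := by
    field_simp
    linarith [hdet]
  set b := M 0 1 with hbdef
  have hMeq : M = !![a, b; 0, a⁻¹] := by
    ext i j
    fin_cases i <;> fin_cases j <;> simp [h00, h10, h11, hbdef]
  set c : ℝ := (2 + Real.sqrt 2) * a with hcdef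
  have hc : 0 < c := by
    have := Real.sqrt_nonneg 2
    positivity
  set n : ℤ := ⌈(b - 1) / c⌉ with hndef
  have hn1 : (b - 1) / c ≤ n := Int.le_ceil _
  have hn2 : (n : ℝ) < (b - 1) / c + 1 := Int.ceil_lt_add_one _
  have hb1 : b - n * c ≤ 1 := by
    have := (div_le_iff₀ hc).mp hn1
    linarith
  have hb2 : 1 - c < b - n * c := by
    have : (n : ℝ) * c < ((b - 1) / c + 1) * c := by
      exact mul_lt_mul_of_pos_right hn2 hc
    rw [add_mul, div_mul_cancel₀ _ (ne_of_gt hc)] at this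
    linarith
  refine ⟨γ * Sgen ^ (-n), ?_, (a, b - n * c), ?_, ?_⟩
  · exact mul_mem hγ (Γ.zpow_mem (Subgroup.subset_closure (Or.inr rfl)) _)
  · exact ⟨ha0, ha1, by rw [← hcdef]; exact hb2, hb1⟩
  · rw [← mul_assoc, Matrix.SpecialLinearGroup.coe_mul, ← hMdef, hMeq, Sgen_zpow,
      Matrix.mul_fin_two]
    push_cast
    rw [hcdef]
    congr 1 <;> ring
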